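/- Let n ≥ 0 be an integer and let S : ℤ → ℂ satisfy S(0) = 1, S(1) = v, and S(k+1) = v·S(k) − S(k−1) for every integer k, where v ∈ ℂ. Then S(n) − S(n−1) = Π_{j=1}^{n} ( v − 2·cos((2j−1)π/(2n+1)) ). -/

import Mathlib

open Polynomial Polynomial.Chebyshev

-- degree and top coefficient of U over ℂ
lemma U_deg_coeff : ∀ k : ℕ, (U ℂ (k:ℤ)).natDegree ≤ k ∧ (U ℂ (k:ℤ)).coeff k = 2 ^ k := by
  intro k
  induction k using Nat.strong_induction_on with
  | _ k ih =>
    match k with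
    | 0 => simp [U_zero]
    | 1 => constructor
           · simpa [U_one] using natDegree_C_mul_le (2:ℂ) X
           · simp [U_one, coeff_X]
    | (k+2) =>
      obtain ⟨hd1, hc1⟩ := ih (k+1) (by omega)
      obtain ⟨hd0, hc0⟩ := ih k (by omega)
      have hU : U ℂ ((k:ℤ)+2) = 2 * X * U ℂ ((k:ℤ)+1) - U ℂ (k:ℤ) := U_add_two ℂ k
      have hcast : ((k+2 : ℕ) : ℤ) = (k:ℤ) + 2 := by push_cast; ring
      have hcast1 : ((k+1 : ℕ) : ℤ) = (k:ℤ) + 1 := by push_cast; ring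
      rw [hcast, hU]
      constructor
      · refine (natDegree_sub_le _ _).trans ?_
        have h1 : (2 * X * U ℂ ((k:ℤ)+1)).natDegree ≤ k + 2 := by
          refine (natDegree_mul_le).trans ?_
          have : (2 * X : ℂ[X]).natDegree ≤ 1 := by
            simpa using natDegree_C_mul_le (2:ℂ) X
          rw [← hcast1] at *
          omega
        have h0 : (U ℂ (k:ℤ)).natDegree ≤ k + 2 := hd0.trans (by omega)
        omega
      · rw [coeff_sub]
        have h0 : (U ℂ (k:ℤ)).coeff (k+2) = 0 :=
          coeff_eq_zero_of_natDegree_lt (by omega)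
        have h1 : (2 * X * U ℂ ((k:ℤ)+1)).coeff (k+2) = 2 * (U ℂ ((k:ℤ)+1)).coeff (k+1) := by
          have h2 : (2:ℂ[X]) = C 2 := (map_ofNat Polynomial.C 2).symm
          rw [mul_assoc, h2, coeff_C_mul, coeff_X_mul]
        rw [h0, h1, ← hcast1, hc1]
        ring


lemma theta_mem {n j : ℕ} (hj : j ∈ Finset.Icc 1 n) :
    0 < (2 * (j:ℝ) - 1) * Real.pi / (2 * (n:ℝ) + 1) ∧
      (2 * (j:ℝ) - 1) * Real.pi / (2 * (n:ℝ) + 1) < Real.pi := by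
  have hpi := Real.pi_pos
  rw [Finset.mem_Icc] at hj
  have h1 : (1:ℝ) ≤ (j:ℝ) := by exact_mod_cast hj.1
  have h2 : (j:ℝ) ≤ (n:ℝ) := by exact_mod_cast hj.2
  have hden : (0:ℝ) < 2 * (n:ℝ) + 1 := by positivity
  constructor
  · apply div_pos (by nlinarith) hden
  · rw [div_lt_iff₀ hden]; nlinarith

lemma root_lemma (n j : ℕ) (hj : j ∈ Finset.Icc 1 n) :
    (U ℂ (n:ℤ) - U ℂ ((n:ℤ)-1)).eval
      ((Real.cos ((2 * (j:ℝ) - 1) * Real.pi / (2 * (n:ℝ) + 1)) : ℂ)) = 0 := by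
  set x : ℝ := (2 * (j:ℝ) - 1) * Real.pi / (2 * (n:ℝ) + 1) with hx
  have hden : (0:ℝ) < 2 * (n:ℝ) + 1 := by positivity
  have hxpi : (2 * (n:ℝ) + 1) * x = (2 * (j:ℝ) - 1) * Real.pi := by
    rw [hx]; field_simp
  obtain ⟨hx0, hxlt⟩ := theta_mem hj
  have hsin : Real.sin x ≠ 0 := ne_of_gt (Real.sin_pos_of_pos_of_lt_pi hx0 hxlt)
  have hj1 : 1 ≤ j := (Finset.mem_Icc.mp hj).1
  -- real trig identity
  have key : Real.sin (((n:ℝ)+1) * x) = Real.sin ((n:ℝ) * x) := by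
    have h3 : ((n:ℝ)+1) * x = (Real.pi - (n:ℝ) * x) + ((j-1 : ℕ):ℝ) * (2 * Real.pi) := by
      have : ((j-1:ℕ):ℝ) = (j:ℝ) - 1 := by
        push_cast [hj1]; ring
      rw [this]; nlinarith [hxpi]
    rw [h3, Real.sin_add_nat_mul_two_pi, Real.sin_pi_sub]
  -- complex version
  have h1 := U_complex_cos (θ := (x:ℂ)) (n:ℤ)
  have h2 := U_complex_cos (θ := (x:ℂ)) ((n:ℤ)-1)
  have hcos : ((Real.cos x : ℝ) : ℂ) = Complex.cos (x:ℂ) := Complex.ofReal_cos x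
  have hsinC : Complex.sin (x:ℂ) ≠ 0 := by
    rw [← Complex.ofReal_sin]
    exact_mod_cast hsin
  rw [hcos, eval_sub]
  have hmul : ((U ℂ (n:ℤ)).eval (Complex.cos x) - (U ℂ ((n:ℤ)-1)).eval (Complex.cos x))
      * Complex.sin (x:ℂ) = 0 := by
    rw [sub_mul, h1, h2]
    have : (((n:ℤ) - 1 : ℤ) : ℂ) + 1 = (n:ℝ) := by push_cast; ring
    rw [this]
    have h4 : (((n:ℤ) : ℂ) + 1) * (x:ℂ) = (((n:ℝ)+1) * x : ℝ) := by push_cast; ring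
    have h5 : ((n:ℝ) : ℂ) * (x:ℂ) = ((n:ℝ) * x : ℝ) := by push_cast; ring
    rw [h4, h5, ← Complex.ofReal_sin, ← Complex.ofReal_sin, key, sub_self]
  rcases mul_eq_zero.mp hmul with h | h
  · exact h
  · exact absurd h hsinC

lemma cos_injOn (n : ℕ) : Set.InjOn
    (fun j : ℕ => ((Real.cos ((2 * (j:ℝ) - 1) * Real.pi / (2 * (n:ℝ) + 1)) : ℝ) : ℂ))
    (Finset.Icc 1 n) := by
  intro a ha b hb hab
  simp only [Finset.coe_Icc, Set.mem_Icc] at ha hb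
  have ha' : a ∈ Finset.Icc 1 n := Finset.mem_Icc.mpr ha
  have hb' : b ∈ Finset.Icc 1 n := Finset.mem_Icc.mpr hb
  obtain ⟨ha0, halt⟩ := theta_mem ha'
  obtain ⟨hb0, hblt⟩ := theta_mem hb'
  have hcos : Real.cos ((2 * (a:ℝ) - 1) * Real.pi / (2 * (n:ℝ) + 1)) =
      Real.cos ((2 * (b:ℝ) - 1) * Real.pi / (2 * (n:ℝ) + 1)) :=
    Complex.ofReal_inj.mp (by simpa using hab)
  have hθ := Real.injOn_cos ⟨ha0.le, halt.le⟩ ⟨hb0.le, hblt.le⟩ hcos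
  have hden : (0:ℝ) < 2 * (n:ℝ) + 1 := by positivity
  have hpi := Real.pi_pos
  rw [div_eq_div_iff (ne_of_gt hden) (ne_of_gt hden)] at hθ
  have h1 := mul_right_cancel₀ (ne_of_gt hden) hθ
  have h2 := mul_right_cancel₀ Real.pi_ne_zero h1
  have : (a:ℝ) = (b:ℝ) := by linarith
  exact_mod_cast this

lemma poly_id (n : ℕ) (hn : 1 ≤ n) :
    U ℂ (n:ℤ) - U ℂ ((n:ℤ)-1) = C ((2:ℂ)^n) *
      ∏ j ∈ Finset.Icc 1 n,
        (X - C ((Real.cos ((2 * (j:ℝ) - 1) * Real.pi / (2 * (n:ℝ) + 1)) : ℂ))) := by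
  set P := U ℂ (n:ℤ) - U ℂ ((n:ℤ)-1) with hP
  set Q := C ((2:ℂ)^n) * ∏ j ∈ Finset.Icc 1 n,
      (X - C ((Real.cos ((2 * (j:ℝ) - 1) * Real.pi / (2 * (n:ℝ) + 1)) : ℂ))) with hQ
  have hcast : ((n:ℤ) - 1) = ((n-1 : ℕ) : ℤ) := by omega
  obtain ⟨hdn, hcn⟩ := U_deg_coeff n
  obtain ⟨hdn1, hcn1⟩ := U_deg_coeff (n-1)
  rw [← hcast] at hdn1 hcn1
  have hPdeg : P.natDegree ≤ n :=
    (natDegree_sub_le _ _).trans (max_le hdn (hdn1.trans (by omega)))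
  have hPcoeff : P.coeff n = 2^n := by
    rw [hP, coeff_sub, hcn,
      coeff_eq_zero_of_natDegree_lt (lt_of_le_of_lt hdn1 (by omega)), sub_zero]
  have hmonic : (∏ j ∈ Finset.Icc 1 n,
      ((X : ℂ[X]) - C ((Real.cos ((2 * (j:ℝ) - 1) * Real.pi / (2 * (n:ℝ) + 1)) : ℂ)))).Monic :=
    monic_prod_of_monic _ _ fun j _ => monic_X_sub_C _
  have hproddeg : (∏ j ∈ Finset.Icc 1 n,
      ((X : ℂ[X]) - C ((Real.cos ((2 * (j:ℝ) - 1) * Real.pi / (2 * (n:ℝ) + 1)) : ℂ)))).natDegree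
      = n := by
    rw [natDegree_prod _ _ fun j _ => X_sub_C_ne_zero _]
    simp [natDegree_X_sub_C, Nat.card_Icc]
  have hQdeg : Q.natDegree ≤ n := by
    rw [hQ]; exact (natDegree_C_mul_le _ _).trans hproddeg.le
  have hQcoeff : Q.coeff n = 2^n := by
    have h := hmonic.coeff_natDegree
    rw [hproddeg] at h
    rw [hQ, coeff_C_mul, h, mul_one]
  have hDdeg : (P - Q).natDegree ≤ n := (natDegree_sub_le _ _).trans (max_le hPdeg hQdeg)
  have hDcoeff : (P - Q).coeff n = 0 := by rw [coeff_sub, hPcoeff, hQcoeff, sub_self]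
  have hD0 : P - Q = 0 := by
    by_cases hD : P - Q = 0
    · exact hD
    · have hlt : (P - Q).natDegree < n := by
        rcases lt_or_eq_of_le hDdeg with h | h
        · exact h
        · exact absurd (by rw [← leadingCoeff_eq_zero, Polynomial.leadingCoeff, h]; exact hDcoeff) hD
      apply eq_zero_of_natDegree_lt_card_of_eval_eq_zero' (P - Q)
        ((Finset.Icc 1 n).image
          (fun j : ℕ => ((Real.cos ((2 * (j:ℝ) - 1) * Real.pi / (2 * (n:ℝ) + 1)) : ℝ) : ℂ)))
      · intro i hi
        obtain ⟨j, hj, rfl⟩ := Finset.mem_image.mp hi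
        rw [eval_sub]
        have h1 := root_lemma n j hj
        have h2 : Q.eval ((Real.cos ((2 * (j:ℝ) - 1) * Real.pi / (2 * (n:ℝ) + 1)) : ℂ)) = 0 := by
          rw [hQ, eval_mul, eval_prod]
          apply mul_eq_zero_of_right
          apply Finset.prod_eq_zero hj
          simp
        rw [hP] at *
        rw [h1, h2, sub_zero]
      · rw [Finset.card_image_of_injOn (cos_injOn n), Nat.card_Icc]
        omega
  linear_combination hD0

theorem chebyshev_product_formula_even
    (v : ℂ) (S : ℤ → ℂ)
    (h0 : S 0 = 1) (h1 : S 1 = v)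
    (hrec : ∀ k : ℤ, S (k + 1) = v * S k - S (k - 1))
    (n : ℕ) :
    S n - S ((n : ℤ) - 1) = ∏ j ∈ Finset.Icc 1 n,
      (v - 2 * (Real.cos ((2 * (j : ℝ) - 1) * Real.pi / (2 * n + 1)) : ℂ)) := by
  -- Step 1 : S k = eval (v/2) (U ℂ k)
  have hS : ∀ k : ℤ, S k = (U ℂ k).eval (v/2) ∧ S (k-1) = (U ℂ (k-1)).eval (v/2) := by
    intro k
    induction k using Int.induction_on with
    | zero =>
      constructor
      · simp [h0, U_zero]
      · have hm1 : S (-1) = 0 := by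
          have := hrec 0; simp [h0, h1] at this; linear_combination this
        rw [show (0:ℤ)-1 = -1 by ring, hm1, U_neg_one, eval_zero]
    | succ k ihk =>
      obtain ⟨hk, hk1⟩ := ihk
      constructor
      · have := hrec k
        rw [this, hk, hk1, U_add_one ℂ k]
        simp only [eval_sub, eval_mul, eval_X, eval_ofNat]
        ring
      · simpa using hk
    | pred k ihk =>
      obtain ⟨hk, hk1⟩ := ihk
      constructor
      · simpa using hk1
      · have hr := hrec (-(k:ℤ) - 1)
        have : S (-(k:ℤ) - 1 - 1) = v * S (-(k:ℤ)-1) - S (-(k:ℤ)) := by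
          have h' : (-(k:ℤ) - 1) + 1 = -(k:ℤ) := by ring
          rw [h'] at hr
          linear_combination hr
        rw [show (-(k:ℤ) - 1) - 1 = -(k:ℤ) - 1 - 1 by ring, this, hk, hk1,
          show (-(k:ℤ) - 1 - 1) = -(k:ℤ) - 2 by ring, U_sub_two ℂ (-(k:ℤ))]
        simp only [eval_sub, eval_mul, eval_X, eval_ofNat]
        ring
  rcases Nat.eq_zero_or_pos n with rfl | hn
  · rw [show ((0:ℕ):ℤ) = 0 by norm_num, (hS 0).1, (hS 0).2]
    simp [U_zero, show (0:ℤ)-1 = -1 by ring, U_neg_one]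
  · rw [(hS n).1, (hS n).2, ← eval_sub, poly_id n hn, eval_mul, eval_C, eval_prod]
    simp only [eval_sub, eval_X, eval_C]
    have hc : ∀ j ∈ Finset.Icc 1 n,
        v - 2 * ((Real.cos ((2 * (j:ℝ) - 1) * Real.pi / (2 * (n:ℝ) + 1)) : ℝ) : ℂ)
        = 2 * (v/2 - ((Real.cos ((2 * (j:ℝ) - 1) * Real.pi / (2 * (n:ℝ) + 1)) : ℝ) : ℂ)) :=
      fun j _ => by ring
    rw [Finset.prod_congr rfl hc, Finset.prod_mul_distrib, Finset.prod_const, Nat.card_Icc]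
    norm_num
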